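/- arXiv:1308.5741 — 3 statements merged into one kernel-verified Lean document; each statement's English description precedes it below -/
import Mathlib

section
/- If G is a nonempty finite simple graph with cyclomatic number k in which every vertex has degree at least 2 and no two vertices of degree exactly 2 are adjacent, then G has at most 5k − 5 vertices and at most 6k − 6 edges. -/
open SimpleGraph

/-- The cyclomatic number m − n + c of a finite simple graph, as an integer. -/
noncomputable def cyclomaticNumber (V : Type) [Fintype V] (G : SimpleGraph V) : ℤ :=
  (Nat.card G.edgeSet : ℤ) - (Fintype.card V : ℤ) + (Nat.card G.ConnectedComponent : ℤ)

/-- `b` lies strictly between `a` and `c`. -/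
def StrictBtw (a b c : ℕ) : Prop := (a < b ∧ b < c) ∨ (c < b ∧ b < a)

/-- Two edges cross in the 1-page drawing given by the vertex order `f`:
they have four distinct endpoints `u v x y` with exactly one of `x`, `y`
strictly between `u` and `v`. -/
def Cross1 {V : Type} (f : V ↪ ℕ) (e₁ e₂ : Sym2 V) : Prop :=
  ∃ u v x y : V, e₁ = s(u, v) ∧ e₂ = s(x, y) ∧
    u ≠ v ∧ u ≠ x ∧ u ≠ y ∧ v ≠ x ∧ v ≠ y ∧ x ≠ y ∧
    Xor' (StrictBtw (f u) (f x) (f v)) (StrictBtw (f u) (f y) (f v))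

/-- Number of unordered pairs of edges of `G` crossing in the 1-page drawing `f`. -/
noncomputable def numCross1 {V : Type} (G : SimpleGraph V) (f : V ↪ ℕ) : ℕ :=
  Nat.card {P : Set (Sym2 V) // ∃ e₁ e₂, e₁ ∈ G.edgeSet ∧ e₂ ∈ G.edgeSet ∧
    P = {e₁, e₂} ∧ Cross1 f e₁ e₂}

/-- Number of edges of `G` crossing at least one other edge in the 1-page drawing `f`. -/
noncomputable def numCrossedEdges1 {V : Type} (G : SimpleGraph V) (f : V ↪ ℕ) : ℕ :=
  Nat.card {e : Sym2 V // e ∈ G.edgeSet ∧ ∃ e' ∈ G.edgeSet, Cross1 f e e'}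

/-- The 1-page book crossing number. -/
noncomputable def cr1 {V : Type} (G : SimpleGraph V) : ℕ := ⨅ f : V ↪ ℕ, numCross1 G f

/-- The 1-page crossed-edge number. -/
noncomputable def ce1 {V : Type} (G : SimpleGraph V) : ℕ := ⨅ f : V ↪ ℕ, numCrossedEdges1 G f

/-- Two edges cross in the 2-page drawing `(f, σ)`: same page and 1-page crossing. -/
def Cross2 {V : Type} (f : V ↪ ℕ) (σ : Sym2 V → Bool) (e₁ e₂ : Sym2 V) : Prop :=
  σ e₁ = σ e₂ ∧ Cross1 f e₁ e₂

/-- Number of unordered pairs of edges of `G` crossing in the 2-page drawing `(f, σ)`. -/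
noncomputable def numCross2 {V : Type} (G : SimpleGraph V) (f : V ↪ ℕ) (σ : Sym2 V → Bool) : ℕ :=
  Nat.card {P : Set (Sym2 V) // ∃ e₁ e₂, e₁ ∈ G.edgeSet ∧ e₂ ∈ G.edgeSet ∧
    P = {e₁, e₂} ∧ Cross2 f σ e₁ e₂}

/-- Number of edges of `G` crossing at least one other edge in the 2-page drawing `(f, σ)`. -/
noncomputable def numCrossedEdges2 {V : Type} (G : SimpleGraph V) (f : V ↪ ℕ)
    (σ : Sym2 V → Bool) : ℕ :=
  Nat.card {e : Sym2 V // e ∈ G.edgeSet ∧ ∃ e' ∈ G.edgeSet, Cross2 f σ e e'}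

/-- The 2-page book crossing number. -/
noncomputable def cr2 {V : Type} (G : SimpleGraph V) : ℕ :=
  ⨅ f : V ↪ ℕ, ⨅ σ : Sym2 V → Bool, numCross2 G f σ

/-- The 2-page crossed-edge number. -/
noncomputable def ce2 {V : Type} (G : SimpleGraph V) : ℕ :=
  ⨅ f : V ↪ ℕ, ⨅ σ : Sym2 V → Bool, numCrossedEdges2 G f σ

/-- The graph obtained from `G` by subdividing the edge `uv`: the edge `uv` is
deleted and a new vertex `none` is joined to `u` and `v`. -/
def subdivide {V : Type} (G : SimpleGraph V) (u v : V) : SimpleGraph (Option V) where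
  Adj a b :=
    (∃ x y : V, a = some x ∧ b = some y ∧ G.Adj x y ∧ ¬(x = u ∧ y = v) ∧ ¬(x = v ∧ y = u)) ∨
    (a = none ∧ (b = some u ∨ b = some v)) ∨
    (b = none ∧ (a = some u ∨ a = some v))
  symm := ⟨fun a b h => by
    rcases h with ⟨x, y, ha, hb, hxy, h1, h2⟩ | h | h
    · exact Or.inl ⟨y, x, hb, ha, hxy.symm, fun ⟨p, q⟩ => h2 ⟨q, p⟩, fun ⟨p, q⟩ => h1 ⟨q, p⟩⟩
    · exact Or.inr (Or.inr h)
    · exact Or.inr (Or.inl h)⟩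
  loopless := ⟨fun a h => by
    rcases h with ⟨x, y, ha, hb, hxy, _, _⟩ | ⟨h1, h2 | h2⟩ | ⟨h1, h2 | h2⟩ <;>
      simp_all [G.loopless]⟩

/-- The graph obtained from `G` by contracting the edge `uv`: `v` is removed and
the merged vertex `u` becomes adjacent to every other former neighbor of `u` or `v`. -/
def contractEdge {V : Type} (G : SimpleGraph V) (u v : V) : SimpleGraph {x : V // x ≠ v} where
  Adj a b := a ≠ b ∧
    (G.Adj a.1 b.1 ∨ (a.1 = u ∧ G.Adj v b.1) ∨ (b.1 = u ∧ G.Adj a.1 v))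
  symm := ⟨fun a b h => by
    obtain ⟨hne, h⟩ := h
    refine ⟨hne.symm, ?_⟩
    rcases h with h | ⟨h1, h2⟩ | ⟨h1, h2⟩
    · exact Or.inl h.symm
    · exact Or.inr (Or.inr ⟨h1, h2.symm⟩)
    · exact Or.inr (Or.inl ⟨h1, h2.symm⟩)⟩
  loopless := ⟨fun a h => h.1 rfl⟩


/-- If `G` is a nonempty finite simple graph with cyclomatic number `k`
in which every vertex has degree at least 2 and no two vertices of degree exactly 2
are adjacent, then `G` has at most `5k - 5` vertices and at most `6k - 6` edges. -/
theorem stmt7 {V : Type} [Fintype V] [DecidableEq V] [Nonempty V]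
    (G : SimpleGraph V) [DecidableRel G.Adj] (k : ℕ)
    (hk : cyclomaticNumber V G = (k : ℤ))
    (hdeg : ∀ v : V, 2 ≤ G.degree v)
    (hno2adj : ∀ u w : V, G.Adj u w → G.degree u = 2 → G.degree w ≠ 2) :
    (Fintype.card V : ℤ) ≤ 5 * (k : ℤ) - 5 ∧
    (Nat.card G.edgeSet : ℤ) ≤ 6 * (k : ℤ) - 6 := by
  classical
  set m := G.edgeFinset.card with hm
  have hmcard : Nat.card G.edgeSet = m := by
    rw [Nat.card_eq_fintype_card, hm, ← SimpleGraph.edgeFinset_card]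
  set n := Fintype.card V with hn
  set c := Nat.card G.ConnectedComponent with hc
  have : Nonempty G.ConnectedComponent := ⟨G.connectedComponentMk (Classical.arbitrary V)⟩
  have hc1 : 1 ≤ c := Nat.card_pos
  have hk' : (m : ℤ) - (n : ℤ) + (c : ℤ) = (k : ℤ) := by
    rw [← hk, cyclomaticNumber, hmcard]
  set S : Finset V := Finset.univ.filter (fun v => G.degree v = 2) with hS
  set T : Finset V := Finset.univ.filter (fun v => ¬ G.degree v = 2) with hT
  have hnab : n = S.card + T.card := by
    rw [hn, ← Finset.card_univ, hS, hT, Finset.card_filter_add_card_filter_not]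
  -- sum of degrees over S equals 2 * S.card
  have hSsum : ∑ v ∈ S, G.degree v = 2 * S.card := by
    rw [Finset.sum_congr rfl (fun v hv => (Finset.mem_filter.mp hv).2)]
    simp [mul_comm]
    rfl
  -- sum over T is at least 3 * T.card
  have hTsum : 3 * T.card ≤ ∑ v ∈ T, G.degree v := by
    have : ∀ v ∈ T, 3 ≤ G.degree v := by
      intro v hv
      have h2 := hdeg v
      have hne := (Finset.mem_filter.mp hv).2
      omega
    calc 3 * T.card = ∑ _v ∈ T, 3 := by simp [mul_comm]
      _ ≤ ∑ v ∈ T, G.degree v := Finset.sum_le_sum this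
  have hsum : ∑ v ∈ S, G.degree v + ∑ v ∈ T, G.degree v = 2 * m := by
    rw [hS, hT, Finset.sum_filter_add_sum_filter_not, G.sum_degrees_eq_twice_card_edges]
  -- S is independent, so sum of degrees over S ≤ m
  have hSindep : ∑ v ∈ S, G.degree v ≤ m := by
    have hdisj : ∀ u ∈ S, ∀ w ∈ S, u ≠ w →
        Disjoint (G.incidenceFinset u) (G.incidenceFinset w) := by
      intro u hu w hw huw
      rw [Finset.disjoint_left]
      intro e heu hew
      rw [SimpleGraph.mem_incidenceFinset] at heu hew
      exact hno2adj u w (G.adj_of_mem_incidenceSet huw heu hew)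
        (Finset.mem_filter.mp hu).2 (Finset.mem_filter.mp hw).2
    calc ∑ v ∈ S, G.degree v = ∑ v ∈ S, (G.incidenceFinset v).card := by
          simp [SimpleGraph.card_incidenceFinset_eq_degree]
      _ = (S.biUnion (fun v => G.incidenceFinset v)).card :=
          (Finset.card_biUnion hdisj).symm
      _ ≤ m := by
          apply Finset.card_le_card
          intro e he
          obtain ⟨v, _, hv⟩ := Finset.mem_biUnion.mp he
          rw [SimpleGraph.mem_incidenceFinset] at hv
          exact SimpleGraph.mem_edgeFinset.mpr hv.1
  rw [hmcard]
  omega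
end

section
/- Every finite simple graph G with cyclomatic number k admits a 2-page book drawing in which at most k edges cross at least one other edge and at most k(k−1)/2 unordered pairs of edges cross; consequently cr2(G) ≤ k(k−1)/2 and ce2(G) ≤ k. -/
open SimpleGraph

section Aux

variable {V : Type}

lemma path_start_unique {G : SimpleGraph V} {y x : V} (p : G.Walk y x) (hp : p.IsPath)
    (a b : V) (ha : s(y,a) ∈ p.edges) (hb : s(y,b) ∈ p.edges) : a = b := by
  cases p with
  | nil => simp at ha
  | @cons _ z _ h q =>
    rw [Walk.cons_isPath_iff] at hp
    have key : ∀ c, s(y,c) ∈ (Walk.cons h q).edges → c = z := by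
      intro c hc
      rw [Walk.edges_cons, List.mem_cons] at hc
      rcases hc with hc | hc
      · rw [Sym2.eq_iff] at hc
        rcases hc with ⟨_, rfl⟩ | ⟨rfl, rfl⟩
        · rfl
        · exact absurd rfl h.ne
      · exact absurd (Walk.fst_mem_support_of_mem_edges q hc) hp.2
    rw [key a ha, key b hb]

lemma exists_leaf [Fintype V] [Nonempty V] (G : SimpleGraph V) (hG : G.IsAcyclic) :
    ∃ v : V, ∀ a b : V, G.Adj v a → G.Adj v b → a = b := by
  classical
  set S : Set ℕ := {n | ∃ (x y : V) (p : G.Walk x y), p.IsPath ∧ p.length = n} with hS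
  have hne : S.Nonempty := ⟨0, Classical.arbitrary V, Classical.arbitrary V, Walk.nil, by simp, rfl⟩
  have hbdd : BddAbove S := by
    refine ⟨Fintype.card V, ?_⟩
    rintro n ⟨x, y, p, hp, rfl⟩
    exact hp.length_lt.le
  obtain ⟨x, y, p, hp, hlen⟩ := Nat.sSup_mem hne hbdd
  refine ⟨y, fun a b ha hb => ?_⟩
  have hmem : ∀ c, G.Adj y c → s(y, c) ∈ p.reverse.edges := by
    intro c hc
    have hsup : c ∈ p.support := by
      by_contra hns
      have hq : (Walk.cons hc.symm p.reverse).IsPath := by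
        rw [Walk.cons_isPath_iff]
        exact ⟨hp.reverse, by rwa [Walk.support_reverse, List.mem_reverse]⟩
      have : (Walk.cons hc.symm p.reverse).length ∈ S :=
        ⟨c, x, _, hq, rfl⟩
      have h2 := le_csSup hbdd this
      simp only [Walk.length_cons, Walk.length_reverse] at h2
      omega
    have hdrop := hp.dropUntil hsup
    have hcyc := hG (Walk.cons hc (p.dropUntil c hsup))
    rw [Walk.cons_isCycle_iff] at hcyc
    push_neg at hcyc
    have := hcyc hdrop
    rw [Walk.edges_reverse, List.mem_reverse]
    exact Walk.edges_dropUntil_subset p hsup this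
  exact path_start_unique p.reverse hp.reverse a b (hmem a ha) (hmem b hb)

lemma walk_delete {G : SimpleGraph V} (u v : V) {x y : V} (p : G.Walk x y) :
    (G.deleteEdges {s(u,v)}).Reachable x y ∨
    (((G.deleteEdges {s(u,v)}).Reachable x u ∨ (G.deleteEdges {s(u,v)}).Reachable x v) ∧
     ((G.deleteEdges {s(u,v)}).Reachable y u ∨ (G.deleteEdges {s(u,v)}).Reachable y v)) := by
  set G' := G.deleteEdges {s(u,v)} with hG'
  induction p with
  | nil => exact Or.inl (Reachable.refl _)
  | @cons a c d h q ih =>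
    by_cases he : s(a, c) = s(u, v)
    · have hnear : (G'.Reachable a u ∨ G'.Reachable a v) ∧
          (G'.Reachable c u ∨ G'.Reachable c v) := by
        rw [Sym2.eq_iff] at he
        rcases he with ⟨rfl, rfl⟩ | ⟨rfl, rfl⟩
        · exact ⟨Or.inl (Reachable.refl _), Or.inr (Reachable.refl _)⟩
        · exact ⟨Or.inr (Reachable.refl _), Or.inl (Reachable.refl _)⟩
      refine Or.inr ⟨hnear.1, ?_⟩
      rcases ih with hr | ⟨_, hy⟩
      · rcases hnear.2 with hcu | hcv
        · exact Or.inl (hr.symm.trans hcu)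
        · exact Or.inr (hr.symm.trans hcv)
      · exact hy
    · have hadj : G'.Adj a c := by
        rw [hG', deleteEdges_adj]
        exact ⟨h, by simpa using he⟩
      rcases ih with hr | ⟨hc, hy⟩
      · exact Or.inl (hadj.reachable.trans hr)
      · refine Or.inr ⟨?_, hy⟩
        rcases hc with h1 | h1
        · exact Or.inl (hadj.reachable.trans h1)
        · exact Or.inr (hadj.reachable.trans h1)

lemma reachable_iff_of_reachable {G : SimpleGraph V} {u v : V}
    (hr : (G.deleteEdges {s(u,v)}).Reachable u v) (x y : V) :
    G.Reachable x y ↔ (G.deleteEdges {s(u,v)}).Reachable x y := by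
  constructor
  · rintro ⟨p⟩
    rcases walk_delete u v p with h | ⟨hx, hy⟩
    · exact h
    · have hx' : (G.deleteEdges {s(u,v)}).Reachable x u := by
        rcases hx with h | h
        · exact h
        · exact h.trans hr.symm
      have hy' : (G.deleteEdges {s(u,v)}).Reachable y u := by
        rcases hy with h | h
        · exact h
        · exact h.trans hr.symm
      exact hx'.trans hy'.symm
  · intro h
    exact h.mono (deleteEdges_le _)

lemma card_components_delete_eq {G : SimpleGraph V} {u v : V}
    (hr : (G.deleteEdges {s(u,v)}).Reachable u v) :
    Nat.card (G.deleteEdges {s(u,v)}).ConnectedComponent = Nat.card G.ConnectedComponent := by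
  set G' := G.deleteEdges {s(u,v)}
  have : G'.ConnectedComponent ≃ G.ConnectedComponent := by
    refine Equiv.ofBijective (ConnectedComponent.map (Hom.ofLE (deleteEdges_le _))) ⟨?_, ?_⟩
    · intro c d
      refine ConnectedComponent.ind₂ (fun a b hab => ?_) c d
      simp only [ConnectedComponent.map_mk, Hom.ofLE_apply] at hab
      rw [ConnectedComponent.eq] at hab ⊢
      exact (reachable_iff_of_reachable hr a b).1 hab
    · intro c
      refine ConnectedComponent.ind (fun a => ?_) c
      exact ⟨G'.connectedComponentMk a, rfl⟩
  exact Nat.card_congr this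

lemma card_components_delete_le [Finite V] {G : SimpleGraph V} (u v : V) :
    Nat.card (G.deleteEdges {s(u,v)}).ConnectedComponent ≤ Nat.card G.ConnectedComponent + 1 := by
  classical
  set G' := G.deleteEdges {s(u,v)} with hG'
  set θ : G'.ConnectedComponent → G.ConnectedComponent :=
    ConnectedComponent.map (Hom.ofLE (deleteEdges_le _)) with hθ
  have hinj : Function.Injective (fun c : G'.ConnectedComponent =>
      if c = G'.connectedComponentMk v then (none : Option G.ConnectedComponent) else some (θ c)) := by
    intro c d hcd
    simp only [] at hcd
    by_cases h1 : c = G'.connectedComponentMk v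
    · by_cases h2 : d = G'.connectedComponentMk v
      · rw [h1, h2]
      · rw [if_pos h1, if_neg h2] at hcd
        exact absurd hcd.symm (Option.some_ne_none _)
    · by_cases h2 : d = G'.connectedComponentMk v
      · rw [if_neg h1, if_pos h2] at hcd
        exact absurd hcd (Option.some_ne_none _)
      · rw [if_neg h1, if_neg h2, Option.some_inj] at hcd
        obtain ⟨a, rfl⟩ := c.exists_rep
        obtain ⟨b, rfl⟩ := d.exists_rep
        have hab : G.Reachable a b := ConnectedComponent.exact hcd
        obtain ⟨p⟩ := hab
        rcases walk_delete u v p with h | ⟨hx, hy⟩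
        · exact ConnectedComponent.sound h
        · have hx' : G'.Reachable a u := by
            rcases hx with h | h
            · exact h
            · exact absurd (ConnectedComponent.sound h) h1
          have hy' : G'.Reachable b u := by
            rcases hy with h | h
            · exact h
            · exact absurd (ConnectedComponent.sound h) h2
          exact ConnectedComponent.sound (hx'.trans hy'.symm)
  classical
  haveI hfin : Fintype G.ConnectedComponent := Fintype.ofFinite _
  have := Nat.card_le_card_of_injective _ hinj
  rwa [Finite.card_option] at this

lemma not_strictBtw_odd_even {k z : ℕ} : ¬ StrictBtw (2*k+1) z (2*k) := by
  unfold StrictBtw; omega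

lemma not_strictBtw_even_odd {k z : ℕ} : ¬ StrictBtw (2*k) z (2*k+1) := by
  unfold StrictBtw; omega

lemma strictBtw_shift {α β k : ℕ} (hα : α ≠ k) (hβ : β ≠ k) :
    StrictBtw (2*α) (2*k+1) (2*β) ↔ StrictBtw (2*α) (2*k) (2*β) := by
  unfold StrictBtw; omega

lemma strictBtw_double {a b c : ℕ} : StrictBtw (2*a) (2*b) (2*c) ↔ StrictBtw a b c := by
  unfold StrictBtw; omega

lemma xor_of_iff {P Q : Prop} (h : P ↔ Q) : ¬ Xor' P Q := by
  unfold Xor' Xor; tauto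

lemma xor_congr {P P' Q Q' : Prop} (h1 : P ↔ P') (h2 : Q ↔ Q') : Xor' P Q → Xor' P' Q' := by
  unfold Xor' Xor; tauto

lemma forest_draw : ∀ (n : ℕ) (V : Type) [Fintype V], Fintype.card V ≤ n →
    ∀ (G : SimpleGraph V), G.IsAcyclic →
    ∃ f : V ↪ ℕ, ∀ e1 ∈ G.edgeSet, ∀ e2 ∈ G.edgeSet, ¬ Cross1 f e1 e2 := by
  intro n
  induction n with
  | zero =>
    intro V _ hcard G _
    haveI : IsEmpty V := Fintype.card_eq_zero_iff.mp (Nat.le_zero.mp hcard)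
    refine ⟨⟨fun v => isEmptyElim v, fun v => isEmptyElim v⟩, ?_⟩
    rintro e1 _ e2 _ ⟨a, -⟩
    exact isEmptyElim a
  | succ n ih =>
    intro V _ hcard G hG
    by_cases hle : Fintype.card V ≤ n
    · exact ih V hle G hG
    push_neg at hle
    haveI hne : Nonempty V := by
      rw [← Fintype.card_pos_iff]; omega
    obtain ⟨v, hv⟩ := exists_leaf G hG
    classical
    set s : Set V := {x | x ≠ v} with hs
    have hGs : (G.induce s).IsAcyclic := by
      intro a c hc
      have hm := Walk.map_isCycle_iff_of_injective (p := c)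
        (f := (SimpleGraph.Embedding.induce (G := G) s).toHom)
        (fun x y h => Subtype.val_injective h)
      exact hG _ (hm.mpr hc)
    have hcards : Fintype.card ↥s ≤ n := by
      have h1 : Fintype.card {x : V // x ≠ v} < Fintype.card V :=
        Fintype.card_subtype_lt (x := v) (by simp)
      have h2 : Fintype.card ↥s = Fintype.card {x : V // x ≠ v} := rfl
      omega
    obtain ⟨f', hf'⟩ := ih ↥s hcards (G.induce s) hGs
    by_cases hsne : Nonempty ↥s
    · have hu : ∃ u : ↥s, ∀ x : V, G.Adj v x → x = ↑u := by
        by_cases hnb : ∃ w, G.Adj v w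
        · obtain ⟨w, hw⟩ := hnb
          exact ⟨⟨w, fun hwv => G.loopless.irrefl v (hwv ▸ hw)⟩, fun x hx => hv x w hx hw⟩
        · push_neg at hnb
          exact ⟨Classical.arbitrary _, fun x hx => absurd hx (hnb x)⟩
      obtain ⟨u, hu⟩ := hu
      set F : V → ℕ := fun x => if h : x = v then 2 * f' u + 1 else 2 * f' ⟨x, h⟩ with hF
      have hFv : F v = 2 * f' u + 1 := by simp [hF]
      have hFx : ∀ (x : V) (h : x ≠ v), F x = 2 * f' ⟨x, h⟩ := by
        intro x h; simp [hF, h]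
      have hFu : F ↑u = 2 * f' u := by
        rw [hFx ↑u u.2]
      have hinj : Function.Injective F := by
        intro x y hxy
        by_cases hx : x = v <;> by_cases hy : y = v
        · rw [hx, hy]
        · rw [hFx y hy, hx, hFv] at hxy; omega
        · rw [hFx x hx, hy, hFv] at hxy; omega
        · rw [hFx x hx, hFx y hy] at hxy
          have h2 : f' ⟨x, hx⟩ = f' ⟨y, hy⟩ := by omega
          have := f'.injective h2
          exact congrArg Subtype.val this
      refine ⟨⟨F, hinj⟩, ?_⟩
      intro e1 he1 e2 he2 hc
      obtain ⟨a, b, c, d, rfl, rfl, hab, hac, had, hbc, hbd, hcd, hxor⟩ := hc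
      rw [mem_edgeSet] at he1 he2
      simp only [Function.Embedding.coeFn_mk] at hxor
      by_cases hav : a = v
      · have hbv : b ≠ v := fun h => hab (hav.trans h.symm)
        have hbu : b = ↑u := hu b (hav ▸ he1)
        have hfa : F a = 2 * f' u + 1 := by rw [hav, hFv]
        have hfb : F b = 2 * f' u := by rw [hbu, hFu]
        rw [hfa, hfb] at hxor
        rcases hxor with ⟨h, -⟩ | ⟨h, -⟩ <;> exact not_strictBtw_odd_even h
      by_cases hbv : b = v
      · have hau : a = ↑u := hu a (hbv ▸ he1.symm)
        have hfa : F a = 2 * f' u := by rw [hau, hFu]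
        have hfb : F b = 2 * f' u + 1 := by rw [hbv, hFv]
        rw [hfa, hfb] at hxor
        rcases hxor with ⟨h, -⟩ | ⟨h, -⟩ <;> exact not_strictBtw_even_odd h
      by_cases hcv : c = v
      · have hdu : d = ↑u := hu d (hcv ▸ he2)
        have hfc : F c = 2 * f' u + 1 := by rw [hcv, hFv]
        have hfd : F d = 2 * f' u := by rw [hdu, hFu]
        have hfa : F a = 2 * f' ⟨a, hav⟩ := hFx a hav
        have hfb : F b = 2 * f' ⟨b, hbv⟩ := hFx b hbv
        have hane : f' ⟨a, hav⟩ ≠ f' u := fun h =>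
          had (by rw [hdu]; exact congrArg Subtype.val (f'.injective h))
        have hbne : f' ⟨b, hbv⟩ ≠ f' u := fun h =>
          hbd (by rw [hdu]; exact congrArg Subtype.val (f'.injective h))
        rw [hfa, hfb, hfc, hfd] at hxor
        exact xor_of_iff (strictBtw_shift hane hbne) hxor
      by_cases hdv : d = v
      · have hcu : c = ↑u := hu c (hdv ▸ he2.symm)
        have hfd : F d = 2 * f' u + 1 := by rw [hdv, hFv]
        have hfc : F c = 2 * f' u := by rw [hcu, hFu]
        have hfa : F a = 2 * f' ⟨a, hav⟩ := hFx a hav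
        have hfb : F b = 2 * f' ⟨b, hbv⟩ := hFx b hbv
        have hane : f' ⟨a, hav⟩ ≠ f' u := fun h =>
          hac (by rw [hcu]; exact congrArg Subtype.val (f'.injective h))
        have hbne : f' ⟨b, hbv⟩ ≠ f' u := fun h =>
          hbc (by rw [hcu]; exact congrArg Subtype.val (f'.injective h))
        rw [hfa, hfb, hfc, hfd] at hxor
        exact xor_of_iff ((strictBtw_shift hane hbne).symm) hxor
      · -- none equal to v
        have m1 : s(⟨a, hav⟩, ⟨b, hbv⟩) ∈ (G.induce s).edgeSet := by
          rw [mem_edgeSet]; exact he1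
        have m2 : s(⟨c, hcv⟩, ⟨d, hdv⟩) ∈ (G.induce s).edgeSet := by
          rw [mem_edgeSet]; exact he2
        refine hf' _ m1 _ m2 ⟨⟨a, hav⟩, ⟨b, hbv⟩, ⟨c, hcv⟩, ⟨d, hdv⟩, rfl, rfl,
          fun h => hab (congrArg Subtype.val h), fun h => hac (congrArg Subtype.val h),
          fun h => had (congrArg Subtype.val h), fun h => hbc (congrArg Subtype.val h),
          fun h => hbd (congrArg Subtype.val h), fun h => hcd (congrArg Subtype.val h), ?_⟩
        rw [hFx a hav, hFx b hbv, hFx c hcv, hFx d hdv] at hxor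
        exact xor_congr strictBtw_double strictBtw_double hxor
    · have hall : ∀ x : V, x = v := by
        intro x; by_contra hx
        exact hsne ⟨⟨x, hx⟩⟩
      refine ⟨⟨fun _ => 0, fun a b _ => (hall a).trans (hall b).symm⟩, ?_⟩
      rintro e1 _ e2 _ ⟨a, b, c, d, -, -, hab, -⟩
      exact hab ((hall a).trans (hall b).symm)

lemma cross1_irrefl (f : V ↪ ℕ) (e : Sym2 V) : ¬ Cross1 f e e := by
  rintro ⟨a, b, c, d, he1, he2, hab, hac, had, hbc, hbd, hcd, -⟩
  rw [he1, Sym2.eq_iff] at he2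
  rcases he2 with ⟨h, -⟩ | ⟨h, -⟩
  · exact hac h
  · exact had h

lemma cyc_nonneg [Fintype V] : ∀ (m : ℕ) (G : SimpleGraph V), Nat.card G.edgeSet = m →
    0 ≤ cyclomaticNumber V G := by
  classical
  intro m
  induction m with
  | zero =>
    intro G hm
    have hE : G.edgeSet = ∅ := by
      rw [Nat.card_coe_set_eq] at hm
      exact (Set.ncard_eq_zero (Set.toFinite _)).mp hm
    have hbot : G = ⊥ := edgeSet_eq_empty.mp hE
    subst hbot
    have hcc : Nat.card (⊥ : SimpleGraph V).ConnectedComponent = Fintype.card V := by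
      have he : V ≃ (⊥ : SimpleGraph V).ConnectedComponent :=
        Equiv.ofBijective (⊥ : SimpleGraph V).connectedComponentMk
          ⟨fun x y h => reachable_bot.mp (ConnectedComponent.exact h), fun c => c.exists_rep⟩
      rw [Nat.card_congr he.symm, Nat.card_eq_fintype_card]
    unfold cyclomaticNumber
    rw [hm, hcc]
    simp
  | succ m ih =>
    intro G hm
    have hne : G.edgeSet.Nonempty := by
      rw [Set.nonempty_iff_ne_empty]
      intro h
      rw [Nat.card_coe_set_eq, h, Set.ncard_empty] at hm
      omega
    obtain ⟨e, he⟩ := hne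
    induction e using Sym2.ind with
    | _ u v =>
    set G' := G.deleteEdges {s(u,v)} with hG'
    have hE' : G'.edgeSet = G.edgeSet \ {s(u,v)} := edgeSet_deleteEdges _
    have hcard' : Nat.card G'.edgeSet = m := by
      rw [Nat.card_coe_set_eq, hE']
      rw [Nat.card_coe_set_eq] at hm
      have := Set.ncard_diff_singleton_add_one he (Set.toFinite _)
      omega
    have hccle := card_components_delete_le (G := G) u v
    have h0 := ih G' hcard'
    unfold cyclomaticNumber at h0 ⊢
    rw [hcard'] at h0
    rw [hm]
    have hcast : (Nat.card G'.ConnectedComponent : ℤ) ≤ Nat.card G.ConnectedComponent + 1 := by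
      exact_mod_cast hccle
    push_cast at h0 ⊢
    linarith

lemma main_draw [Fintype V] : ∀ (m : ℕ) (G : SimpleGraph V), Nat.card G.edgeSet = m →
    ∃ (f : V ↪ ℕ) (σ : Sym2 V → Bool) (B : Finset (Sym2 V)),
      ↑B ⊆ G.edgeSet ∧ (B.card : ℤ) ≤ cyclomaticNumber V G ∧
      (∀ e ∈ G.edgeSet, e ∉ B → σ e = false) ∧
      (∀ e1 ∈ G.edgeSet, ∀ e2 ∈ G.edgeSet, Cross2 f σ e1 e2 → e1 ∈ B ∧ e2 ∈ B) := by
  classical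
  have hacyc : ∀ (G : SimpleGraph V), G.IsAcyclic →
      ∃ (f : V ↪ ℕ) (σ : Sym2 V → Bool) (B : Finset (Sym2 V)),
      ↑B ⊆ G.edgeSet ∧ (B.card : ℤ) ≤ cyclomaticNumber V G ∧
      (∀ e ∈ G.edgeSet, e ∉ B → σ e = false) ∧
      (∀ e1 ∈ G.edgeSet, ∀ e2 ∈ G.edgeSet, Cross2 f σ e1 e2 → e1 ∈ B ∧ e2 ∈ B) := by
    intro G hG
    obtain ⟨f, hf⟩ := forest_draw (Fintype.card V) V le_rfl G hG
    refine ⟨f, fun _ => false, ∅, by simp, ?_, fun e _ _ => rfl, ?_⟩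
    · simpa using cyc_nonneg (Nat.card G.edgeSet) G rfl
    · intro e1 h1 e2 h2 hc
      exact absurd hc.2 (hf e1 h1 e2 h2)
  intro m
  induction m with
  | zero =>
    intro G hm
    have hE : G.edgeSet = ∅ := by
      rw [Nat.card_coe_set_eq] at hm
      exact (Set.ncard_eq_zero (Set.toFinite _)).mp hm
    have hbot : G = ⊥ := edgeSet_eq_empty.mp hE
    exact hacyc G (hbot ▸ isAcyclic_bot)
  | succ m ih =>
    intro G hm
    by_cases hac : G.IsAcyclic
    · exact hacyc G hac
    rw [isAcyclic_iff_forall_adj_isBridge] at hac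
    push_neg at hac
    obtain ⟨u, v, hadj, hnb⟩ := hac
    rw [isBridge_iff] at hnb
    push_neg at hnb
    have hr : (G.deleteEdges {s(u,v)}).Reachable u v := hnb
    set G' := G.deleteEdges {s(u,v)} with hG'
    have hE' : G'.edgeSet = G.edgeSet \ {s(u,v)} := edgeSet_deleteEdges _
    have heG : s(u,v) ∈ G.edgeSet := (G.mem_edgeSet).mpr hadj
    have hcard' : Nat.card G'.edgeSet = m := by
      rw [Nat.card_coe_set_eq, hE']
      rw [Nat.card_coe_set_eq] at hm
      have := Set.ncard_diff_singleton_add_one heG (Set.toFinite _)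
      omega
    have hcc : Nat.card G'.ConnectedComponent = Nat.card G.ConnectedComponent :=
      card_components_delete_eq hr
    have hcyc : cyclomaticNumber V G' = cyclomaticNumber V G - 1 := by
      unfold cyclomaticNumber
      rw [hm, hcard', hcc]
      push_cast
      ring
    obtain ⟨f, σ, B, hBsub, hBcard, hfalse, hcross⟩ := ih G' hcard'
    refine ⟨f, fun e => if e = s(u,v) then true else σ e, insert s(u,v) B, ?_, ?_, ?_, ?_⟩
    · intro e heB
      rw [Finset.mem_coe, Finset.mem_insert] at heB
      rcases heB with rfl | heB
      · exact heG
      · exact (hE' ▸ hBsub heB).1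
    · have h1 : (insert s(u,v) B).card ≤ B.card + 1 := Finset.card_insert_le _ _
      have h2 : ((insert s(u,v) B).card : ℤ) ≤ (B.card : ℤ) + 1 := by exact_mod_cast h1
      linarith [hBcard, hcyc.symm.le]
    · intro e he heB
      rw [Finset.mem_insert] at heB
      push_neg at heB
      show (if e = s(u,v) then true else σ e) = false
      rw [if_neg heB.1]
      exact hfalse e (hE' ▸ ⟨he, heB.1⟩) heB.2
    · intro e1 h1 e2 h2 hc
      obtain ⟨hσ, hx⟩ := hc
      by_cases h1e : e1 = s(u,v) <;> by_cases h2e : e2 = s(u,v)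
      · exact absurd (h1e ▸ h2e ▸ hx) (cross1_irrefl f _)
      · simp only [if_pos h1e, if_neg h2e] at hσ
        have he2B : e2 ∈ B := by
          by_contra hB2
          rw [hfalse e2 (hE' ▸ ⟨h2, h2e⟩) hB2] at hσ
          exact Bool.true_eq_false.mp hσ
        exact ⟨h1e ▸ Finset.mem_insert_self _ _, Finset.mem_insert_of_mem he2B⟩
      · simp only [if_neg h1e, if_pos h2e] at hσ
        have he1B : e1 ∈ B := by
          by_contra hB1
          rw [hfalse e1 (hE' ▸ ⟨h1, h1e⟩) hB1] at hσ
          exact Bool.false_eq_true.mp hσ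
        exact ⟨Finset.mem_insert_of_mem he1B, h2e ▸ Finset.mem_insert_self _ _⟩
      · simp only [if_neg h1e, if_neg h2e] at hσ
        have := hcross e1 (hE' ▸ ⟨h1, h1e⟩) e2 (hE' ▸ ⟨h2, h2e⟩) ⟨hσ, hx⟩
        exact ⟨Finset.mem_insert_of_mem this.1, Finset.mem_insert_of_mem this.2⟩

end Aux

/-- Every finite simple graph `G` with cyclomatic number `k` admits a
2-page book drawing in which at most `k` edges cross at least one other edge and at
most `k(k-1)/2` unordered pairs of edges cross; consequently `cr2 G ≤ k(k-1)/2` and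
`ce2 G ≤ k`. -/
theorem stmt8 {V : Type} [Fintype V] (G : SimpleGraph V) (k : ℕ)
    (hk : cyclomaticNumber V G = (k : ℤ)) :
    (∃ (f : V ↪ ℕ) (σ : Sym2 V → Bool),
        numCrossedEdges2 G f σ ≤ k ∧ numCross2 G f σ ≤ k * (k - 1) / 2) ∧
    cr2 G ≤ k * (k - 1) / 2 ∧ ce2 G ≤ k := by
  classical
  obtain ⟨f, σ, B, hBsub, hBcard, hfalse, hcross⟩ := main_draw (Nat.card G.edgeSet) G rfl
  have hBk : B.card ≤ k := by
    rw [hk] at hBcard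
    exact_mod_cast hBcard
  have hce : numCrossedEdges2 G f σ ≤ k := by
    have hinj : Function.Injective
        (fun e : {e : Sym2 V // e ∈ G.edgeSet ∧ ∃ e' ∈ G.edgeSet, Cross2 f σ e e'} =>
          (⟨e.1, by
            obtain ⟨he, e', he', hc⟩ := e.2
            exact (hcross e.1 he e' he' hc).1⟩ : {x // x ∈ B})) := by
      intro x y hxy
      have h2 := congrArg Subtype.val hxy
      exact Subtype.ext h2
    have h1 := Nat.card_le_card_of_injective _ hinj
    rw [Nat.card_eq_finsetCard] at h1
    exact le_trans h1 hBk
  have hcr : numCross2 G f σ ≤ k * (k - 1) / 2 := by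
    have key : ∀ P : {P : Set (Sym2 V) // ∃ e₁ e₂, e₁ ∈ G.edgeSet ∧ e₂ ∈ G.edgeSet ∧
        P = {e₁, e₂} ∧ Cross2 f σ e₁ e₂}, ∃ T : Finset (Sym2 V),
        T ∈ B.powersetCard 2 ∧ ↑T = P.1 := by
      rintro ⟨P, e1, e2, h1, h2, rfl, hc⟩
      refine ⟨{e1, e2}, ?_, by simp⟩
      rw [Finset.mem_powersetCard]
      have hne : e1 ≠ e2 := by
        rintro rfl
        exact cross1_irrefl f e1 hc.2
      constructor
      · intro x hx
        rw [Finset.mem_insert, Finset.mem_singleton] at hx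
        have hB := hcross e1 h1 e2 h2 hc
        rcases hx with rfl | rfl
        · exact hB.1
        · exact hB.2
      · exact Finset.card_pair hne
    set Φ : {P : Set (Sym2 V) // ∃ e₁ e₂, e₁ ∈ G.edgeSet ∧ e₂ ∈ G.edgeSet ∧
        P = {e₁, e₂} ∧ Cross2 f σ e₁ e₂} → {T // T ∈ B.powersetCard 2} :=
      fun P => ⟨(key P).choose, (key P).choose_spec.1⟩ with hΦ
    have hinj : Function.Injective Φ := by
      intro x y hxy
      have hx := (key x).choose_spec.2
      have hy := (key y).choose_spec.2
      apply Subtype.ext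
      rw [← hx, ← hy]
      exact congrArg (fun T : {T // T ∈ B.powersetCard 2} => ((T : Finset (Sym2 V)) : Set (Sym2 V))) hxy
    have h1 := Nat.card_le_card_of_injective _ hinj
    rw [Nat.card_eq_finsetCard, Finset.card_powersetCard] at h1
    calc numCross2 G f σ ≤ B.card.choose 2 := h1
      _ ≤ k.choose 2 := Nat.choose_le_choose 2 hBk
      _ = k * (k - 1) / 2 := Nat.choose_two_right k
  refine ⟨⟨f, σ, hce, hcr⟩, ?_, ?_⟩
  · calc cr2 G ≤ ⨅ σ' : Sym2 V → Bool, numCross2 G f σ' := ciInf_le (OrderBot.bddBelow _) f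
      _ ≤ numCross2 G f σ := ciInf_le (OrderBot.bddBelow _) σ
      _ ≤ k * (k - 1) / 2 := hcr
  · calc ce2 G ≤ ⨅ σ' : Sym2 V → Bool, numCrossedEdges2 G f σ' := ciInf_le (OrderBot.bddBelow _) f
      _ ≤ numCrossedEdges2 G f σ := ciInf_le (OrderBot.bddBelow _) σ
      _ ≤ k := hce
end

section
/- If G is a nonempty finite simple graph with cyclomatic number k ≥ 1 in which every vertex has degree at least 2 and every connected set of vertices all having degree exactly 2 in G has at most 2k vertices, then G has at most 6k² vertices and at most 6k² edges. -/
open SimpleGraph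

open Finset in
lemma even_sum_inter {V : Type} [Fintype V] [DecidableEq V] (G : SimpleGraph V)
    [DecidableRel G.Adj] (S : Finset V) :
    Even (∑ v ∈ S, (G.neighborFinset v ∩ S).card) := by
  classical
  let G' : SimpleGraph V :=
    { Adj := fun a b => G.Adj a b ∧ a ∈ S ∧ b ∈ S,
      symm := ⟨fun a b h => ⟨h.1.symm, h.2.2, h.2.1⟩⟩,
      loopless := ⟨fun a h => G.loopless.irrefl a h.1⟩ }
  haveI : DecidableRel G'.Adj := fun a b => instDecidableAnd
  have key : ∑ v ∈ S, (G.neighborFinset v ∩ S).card = ∑ v, G'.degree v := by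
    rw [← Finset.sum_subset (Finset.subset_univ S)]
    · refine Finset.sum_congr rfl fun v hv => ?_
      unfold SimpleGraph.degree
      congr 1
      ext w
      simp only [mem_inter, mem_neighborFinset]
      change _ ↔ G.Adj v w ∧ v ∈ S ∧ w ∈ S
      tauto
    · intro v _ hv
      rw [SimpleGraph.degree, Finset.card_eq_zero]
      ext w
      simp only [mem_neighborFinset, Finset.notMem_empty, iff_false]
      change ¬(G.Adj v w ∧ v ∈ S ∧ w ∈ S)
      tauto
  rw [key, SimpleGraph.sum_degrees_eq_twice_card_edges]
  exact even_two_mul _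

lemma walk_closed {V : Type} {G : SimpleGraph V} {S : Set V}
    (hS : ∀ a b, a ∈ S → G.Adj a b → b ∈ S) {u v : V} (p : G.Walk u v) (hu : u ∈ S) :
    v ∈ S := by
  induction p with
  | nil => exact hu
  | cons h p ih => exact ih (hS _ _ hu h)

open Finset in
lemma comp_connected {V : Type} (G : SimpleGraph V) (D : Set V)
    (q : (G.induce D).ConnectedComponent) :
    (G.induce {v | ∃ h : v ∈ D, (G.induce D).connectedComponentMk ⟨v, h⟩ = q}).Connected := by
  classical
  set S : Set V := {v | ∃ h : v ∈ D, (G.induce D).connectedComponentMk ⟨v, h⟩ = q} with hSdef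
  obtain ⟨x₀, hx₀⟩ := q.exists_rep
  have key : ∀ (a b : D) (p : (G.induce D).Walk a b)
      (ha : (G.induce D).connectedComponentMk a = q)
      (hb : (G.induce D).connectedComponentMk b = q),
      (G.induce S).Reachable ⟨a.1, ⟨a.2, ha⟩⟩ ⟨b.1, ⟨b.2, hb⟩⟩ := by
    intro a b p
    induction p with
    | nil => intro ha hb; rfl
    | @cons x c y h p ih =>
      intro ha hb
      have hc : (G.induce D).connectedComponentMk c = q :=
        (SimpleGraph.ConnectedComponent.connectedComponentMk_eq_of_adj h).symm.trans ha
      have hadj : (G.induce S).Adj ⟨x.1, ⟨x.2, ha⟩⟩ ⟨c.1, ⟨c.2, hc⟩⟩ := h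
      exact hadj.reachable.trans (ih hc hb)
  rw [SimpleGraph.connected_iff]
  refine ⟨?_, ⟨⟨x₀.1, ⟨x₀.2, hx₀⟩⟩⟩⟩
  rintro ⟨u, hu, hqu⟩ ⟨v, hv, hqv⟩
  have hr : (G.induce D).Reachable ⟨u, hu⟩ ⟨v, hv⟩ :=
    SimpleGraph.ConnectedComponent.exact (hqu.trans hqv.symm)
  obtain ⟨p⟩ := hr
  exact key ⟨u, hu⟩ ⟨v, hv⟩ p hqu hqv

open Finset in
theorem stmt17' {V : Type} [Fintype V] [DecidableEq V] [Nonempty V]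
    (G : SimpleGraph V) [DecidableRel G.Adj] (k : ℕ) (hk1 : 1 ≤ k)
    (hk : (Nat.card G.edgeSet : ℤ) - (Fintype.card V : ℤ) + (Nat.card G.ConnectedComponent : ℤ) = (k : ℤ))
    (hdeg : ∀ v : V, 2 ≤ G.degree v)
    (hpaths : ∀ S : Set V, (∀ v ∈ S, G.degree v = 2) → (G.induce S).Connected →
      S.ncard ≤ 2 * k) :
    Fintype.card V ≤ 6 * k ^ 2 ∧ Nat.card G.edgeSet ≤ 6 * k ^ 2 := by
  classical
  set n := Fintype.card V with hn_def
  set m := G.edgeFinset.card with hm_def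
  set c := Nat.card G.ConnectedComponent with hc_def
  have hm_eq : Nat.card G.edgeSet = m := by
    rw [Nat.card_eq_fintype_card, hm_def, SimpleGraph.edgeFinset, Set.toFinset_card]
  rw [hm_eq] at hk ⊢
  -- c ≥ 1
  haveI : Finite G.ConnectedComponent := Quot.finite _
  haveI : Nonempty G.ConnectedComponent := ⟨G.connectedComponentMk (Classical.arbitrary V)⟩
  have hc1 : 1 ≤ c := Nat.card_pos
  -- handshake and n ≤ m
  have hhs : ∑ v, G.degree v = 2 * m := G.sum_degrees_eq_twice_card_edges
  have hmn : n ≤ m := by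
    have h2 : ∑ v : V, 2 ≤ ∑ v, G.degree v := Finset.sum_le_sum fun v _ => hdeg v
    rw [Finset.sum_const, Finset.card_univ, smul_eq_mul, hhs] at h2
    omega
  have hnk : m + c = n + k := by omega
  -- the degree-2 set
  set Dset : Set V := {v | G.degree v = 2} with hDset
  haveI : DecidablePred (· ∈ Dset) := Classical.decPred _
  set Dfin : Finset V := Finset.univ.filter (fun v => G.degree v = 2) with hDfin
  set t := Dfinᶜ.card with ht_def
  have hcard : Dfin.card + t = n := Finset.card_add_card_compl Dfin
  have hsumD : ∑ v ∈ Dfin, G.degree v = 2 * Dfin.card := by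
    rw [Finset.sum_const_nat (m := 2) (fun v hv => (Finset.mem_filter.mp hv).2), mul_comm]
  have hsplit : ∑ v ∈ Dfin, G.degree v + ∑ v ∈ Dfinᶜ, G.degree v = 2 * m := by
    rw [Finset.sum_add_sum_compl, hhs]
  have h3t : 3 * t + 2 * Dfin.card ≤ 2 * m := by
    have h3 : ∀ v ∈ Dfinᶜ, 3 ≤ G.degree v := by
      intro v hv
      have h2 := hdeg v
      have hne : ¬ (G.degree v = 2) := by
        intro h; exact (Finset.mem_compl.mp hv) (Finset.mem_filter.mpr ⟨Finset.mem_univ _, h⟩)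
      omega
    have := Finset.card_nsmul_le_sum Dfinᶜ (fun v => G.degree v) 3 h3
    rw [smul_eq_mul] at this
    omega
  -- components of the induced graph on Dset
  set H := G.induce Dset with hH
  haveI : Finite H.ConnectedComponent := Quot.finite _
  haveI : Fintype H.ConnectedComponent := Fintype.ofFinite _
  set g : Dset → H.ConnectedComponent := fun x => H.connectedComponentMk x with hg
  set fib : H.ConnectedComponent → Finset Dset := fun q => Finset.univ.filter (fun x => g x = q)
    with hfib
  set Sfin : H.ConnectedComponent → Finset V := fun q => (fib q).image Subtype.val with hSfin
  set s := Fintype.card H.ConnectedComponent with hs_def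
  have hmemD : ∀ v : V, v ∈ Dfin ↔ v ∈ Dset := by
    intro v; rw [hDfin, Finset.mem_filter]; simp [hDset]
  have hDcard : Fintype.card Dset = Dfin.card :=
    Fintype.card_of_subtype Dfin hmemD
  have hfib_card : ∑ q, (fib q).card = Dfin.card := by
    rw [← hDcard]
    have h := Finset.sum_card_fiberwise_eq_card_filter (Finset.univ : Finset Dset)
      Finset.univ g
    simp only [Finset.mem_univ, Finset.filter_true] at h
    rw [← Finset.card_univ]
    exact h
  -- each fiber has at most 2k elements
  have hfib_le : ∀ q, (fib q).card ≤ 2 * k := by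
    intro q
    set S : Set V := {v | ∃ h : v ∈ Dset, H.connectedComponentMk ⟨v, h⟩ = q} with hSdef
    have hconn := comp_connected G Dset q
    have hdeg2 : ∀ v ∈ S, G.degree v = 2 := by rintro v ⟨h, _⟩; exact h
    have hle := hpaths S hdeg2 hconn
    have himg : S = Subtype.val '' {x : Dset | g x = q} := by
      ext v
      constructor
      · rintro ⟨h, hq⟩; exact ⟨⟨v, h⟩, hq, rfl⟩
      · rintro ⟨x, hx, rfl⟩; exact ⟨x.2, hx⟩
    have hS : S.ncard = (fib q).card := by
      rw [himg, Set.ncard_image_of_injective _ Subtype.val_injective,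
        Set.ncard_eq_toFinset_card', Set.toFinset_setOf]
    omega
  have hDle : Dfin.card ≤ s * (2 * k) := by
    rw [← hfib_card]
    calc ∑ q, (fib q).card ≤ ∑ _q : H.ConnectedComponent, 2 * k :=
          Finset.sum_le_sum fun q _ => hfib_le q
      _ = s * (2 * k) := by rw [Finset.sum_const, Finset.card_univ, smul_eq_mul, hs_def]
  -- boundary counts
  set out : V → ℕ := fun v => (G.neighborFinset v \ Dfin).card with hout
  set inD : V → ℕ := fun v => (G.neighborFinset v ∩ Dfin).card with hinD
  have hio : ∀ v ∈ Dfin, inD v + out v = 2 := by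
    intro v hv
    rw [hinD, hout, Finset.card_inter_add_card_sdiff, SimpleGraph.card_neighborFinset_eq_degree]
    exact (Finset.mem_filter.mp hv).2
  set B := ∑ v ∈ Dfin, out v with hB
  have hBbound : B + 2 * Dfin.card ≤ 2 * m := by
    have h1 : ∀ v : V, G.neighborFinset v \ Dfin = Dfinᶜ.filter (fun w => G.Adj v w) := by
      intro v; ext w
      simp only [Finset.mem_sdiff, SimpleGraph.mem_neighborFinset, Finset.mem_filter,
        Finset.mem_compl]
      tauto
    have h2 : B = ∑ w ∈ Dfinᶜ, ∑ v ∈ Dfin, if G.Adj v w then 1 else 0 := by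
      rw [hB]
      simp_rw [hout, h1, Finset.card_filter]
      rw [Finset.sum_comm]
    have h3 : ∀ w ∈ Dfinᶜ, (∑ v ∈ Dfin, if G.Adj v w then 1 else 0) ≤ G.degree w := by
      intro w _
      rw [← Finset.card_filter, ← SimpleGraph.card_neighborFinset_eq_degree]
      apply Finset.card_le_card
      intro v hv
      rw [SimpleGraph.mem_neighborFinset]
      exact (Finset.mem_filter.mp hv).2.symm
    have h4 : B ≤ ∑ w ∈ Dfinᶜ, G.degree w := h2 ▸ Finset.sum_le_sum h3
    omega
  -- per-component boundary
  set b : H.ConnectedComponent → ℕ := fun q => ∑ x ∈ fib q, out x.1 with hb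
  have hbB : ∑ q, b q = B := by
    rw [hB, Finset.sum_subtype Dfin hmemD (fun v => out v)]
    exact Finset.sum_fiberwise Finset.univ g (fun x => out x.1)
  have hSsubD : ∀ q, Sfin q ⊆ Dfin := by
    intro q v hv
    obtain ⟨x, _, rfl⟩ := Finset.mem_image.mp hv
    exact (hmemD x.1).mpr x.2
  have hclosure : ∀ (q) (x : Dset), x ∈ fib q →
      G.neighborFinset x.1 ∩ Dfin = G.neighborFinset x.1 ∩ Sfin q := by
    intro q x hx
    ext w
    simp only [Finset.mem_inter, SimpleGraph.mem_neighborFinset]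
    constructor
    · rintro ⟨hadj, hw⟩
      refine ⟨hadj, ?_⟩
      have hwD : w ∈ Dset := (hmemD w).mp hw
      have hHadj : H.Adj x ⟨w, hwD⟩ := hadj
      have hgw : g ⟨w, hwD⟩ = q :=
        (SimpleGraph.ConnectedComponent.connectedComponentMk_eq_of_adj hHadj).symm.trans
          ((Finset.mem_filter.mp hx).2)
      exact Finset.mem_image.mpr ⟨⟨w, hwD⟩, Finset.mem_filter.mpr ⟨Finset.mem_univ _, hgw⟩, rfl⟩
    · rintro ⟨hadj, hw⟩
      exact ⟨hadj, hSsubD q hw⟩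
  have hfib_mem_Dfin : ∀ (q) (x : Dset), x ∈ fib q → x.1 ∈ Dfin := fun q x _ => (hmemD x.1).mpr x.2
  have hb2 : ∀ q, b q ≠ 0 → 2 ≤ b q := by
    intro q hq
    have hval_inj : ∀ x ∈ fib q, ∀ y ∈ fib q, (x : Dset).1 = (y : Dset).1 → x = y :=
      fun x _ y _ h => Subtype.ext h
    have hin_eq : ∑ v ∈ Sfin q, (G.neighborFinset v ∩ Sfin q).card = ∑ x ∈ fib q, inD x.1 := by
      rw [show Sfin q = (fib q).image Subtype.val from rfl, Finset.sum_image hval_inj]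
      refine Finset.sum_congr rfl fun x hx => ?_
      exact congrArg Finset.card (hclosure q x hx).symm
    have heven : Even (∑ x ∈ fib q, inD x.1) := hin_eq ▸ even_sum_inter G (Sfin q)
    have hsum2 : b q + ∑ x ∈ fib q, inD x.1 = 2 * (fib q).card := by
      have step1 : b q + ∑ x ∈ fib q, inD x.1 = ∑ x ∈ fib q, (out x.1 + inD x.1) := by
        rw [Finset.sum_add_distrib]
      have step2 : ∑ x ∈ fib q, (out x.1 + inD x.1) = ∑ _x ∈ fib q, 2 :=
        Finset.sum_congr rfl (fun x hx => by
          rw [add_comm]; exact hio x.1 (hfib_mem_Dfin q x hx))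
      rw [step1, step2, Finset.sum_const, smul_eq_mul, mul_comm]
    obtain ⟨e, he⟩ := heven
    omega
  -- pure components inject into components of G
  set P := Finset.univ.filter (fun q => b q = 0) with hP
  set NP := Finset.univ.filter (fun q => ¬ (b q = 0)) with hNP
  have hPs : P.card + NP.card = s := by
    rw [hP, hNP, Finset.card_filter_add_card_filter_not, Finset.card_univ]
  have hNPb : 2 * NP.card ≤ B := by
    rw [← hbB]
    calc 2 * NP.card = ∑ _q ∈ NP, 2 := by rw [Finset.sum_const, smul_eq_mul, mul_comm]
      _ ≤ ∑ q ∈ NP, b q := Finset.sum_le_sum fun q hq => hb2 q (Finset.mem_filter.mp hq).2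
      _ ≤ ∑ q, b q := Finset.sum_le_sum_of_subset (Finset.subset_univ NP)
  have hPc : P.card ≤ c := by
    haveI : Fintype G.ConnectedComponent := Fintype.ofFinite _
    rw [hc_def, Nat.card_eq_fintype_card, ← Finset.card_univ]
    refine Finset.card_le_card_of_injOn
      (fun q => G.connectedComponentMk (Quot.out q : Dset).1)
      (fun _ _ => Finset.mem_univ _) ?_
    intro q1 hq1 q2 hq2 heq
    have hout1 : ∀ x ∈ fib q1, out x.1 = 0 := by
      have hb0 : b q1 = 0 := (Finset.mem_filter.mp hq1).2
      rw [hb, Finset.sum_eq_zero_iff] at hb0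
      exact hb0
    have hrep : ∀ q : H.ConnectedComponent, (Quot.out q : Dset) ∈ fib q := by
      intro q
      refine Finset.mem_filter.mpr ⟨Finset.mem_univ _, ?_⟩
      exact Quot.out_eq q
    have hclosed : ∀ a b : V, a ∈ (Sfin q1 : Set V) → G.Adj a b → b ∈ (Sfin q1 : Set V) := by
      intro a w ha hadj
      rw [Finset.mem_coe] at ha ⊢
      obtain ⟨x, hx, rfl⟩ := Finset.mem_image.mp ha
      have ho : out x.1 = 0 := hout1 x hx
      rw [hout, Finset.card_eq_zero] at ho
      have hwD : w ∈ Dfin := by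
        by_contra hw
        have : w ∈ G.neighborFinset x.1 \ Dfin :=
          Finset.mem_sdiff.mpr ⟨(SimpleGraph.mem_neighborFinset _ _ _).mpr hadj, hw⟩
        rw [ho] at this
        exact absurd this (Finset.notMem_empty w)
      have : w ∈ G.neighborFinset x.1 ∩ Sfin q1 := by
        rw [← hclosure q1 x hx]
        exact Finset.mem_inter.mpr ⟨(SimpleGraph.mem_neighborFinset _ _ _).mpr hadj, hwD⟩
      exact (Finset.mem_inter.mp this).2
    obtain ⟨p⟩ := SimpleGraph.ConnectedComponent.exact heq
    have hstart : ((Quot.out q1 : Dset) : V) ∈ (Sfin q1 : Set V) := by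
      rw [Finset.mem_coe]
      exact Finset.mem_image.mpr ⟨_, hrep q1, rfl⟩
    have hend := walk_closed hclosed p hstart
    rw [Finset.mem_coe] at hend
    obtain ⟨x, hx, hxeq⟩ := Finset.mem_image.mp hend
    have hxx : x = Quot.out q2 := Subtype.ext hxeq
    have h1 : g x = q1 := (Finset.mem_filter.mp hx).2
    have h2 : g x = q2 := by rw [hxx]; exact (Finset.mem_filter.mp (hrep q2)).2
    exact h1.symm.trans h2
  -- final arithmetic
  have hck : c ≤ k := by omega
  obtain ⟨j, hj⟩ : ∃ j, k = c + j := ⟨k - c, by omega⟩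
  have hmnj : m = n + j := by omega
  have ht2j : t ≤ 2 * j := by omega
  have hBj : B ≤ 6 * j := by omega
  have hNPj : NP.card ≤ 3 * j := by omega
  have hsj : s ≤ c + 3 * j := by omega
  have hDle2 : Dfin.card ≤ (c + 3 * j) * (2 * k) :=
    hDle.trans (Nat.mul_le_mul_right _ hsj)
  have hkc : k ≤ k * c := Nat.le_mul_of_pos_right k hc1
  have key1 : 2 * j ≤ 4 * (k * c) := by
    calc 2 * j ≤ 2 * k := by omega
      _ ≤ 2 * (k * c) := Nat.mul_le_mul_left _ hkc
      _ ≤ 4 * (k * c) := Nat.mul_le_mul_right _ (by norm_num)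
  have key2 : 3 * j ≤ 4 * (k * c) := by
    calc 3 * j ≤ 3 * k := by omega
      _ ≤ 3 * (k * c) := Nat.mul_le_mul_left _ hkc
      _ ≤ 4 * (k * c) := Nat.mul_le_mul_right _ (by norm_num)
  have hexp1 : (c + 3 * j) * (2 * k) = 2 * (k * c) + 6 * (k * j) := by ring
  have hexp2 : 6 * k ^ 2 = 6 * (k * c) + 6 * (k * j) := by rw [hj]; ring
  constructor
  · -- n ≤ 6k²
    have : n ≤ t + Dfin.card := by omega
    calc n = t + Dfin.card := by omega
      _ ≤ 2 * j + ((c + 3 * j) * (2 * k)) := by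
          have := hDle2; omega
      _ ≤ 6 * k ^ 2 := by rw [hexp1, hexp2]; omega
  · calc m = n + j := hmnj
      _ ≤ (t + Dfin.card) + j := by omega
      _ ≤ 3 * j + ((c + 3 * j) * (2 * k)) := by have := hDle2; omega
      _ ≤ 6 * k ^ 2 := by rw [hexp1, hexp2]; omega

/-- If `G` is a nonempty finite simple graph with cyclomatic number
`k ≥ 1` in which every vertex has degree at least 2 and every connected set of
vertices all having degree exactly 2 in `G` has at most `2k` vertices, then `G` has
at most `6k²` vertices and at most `6k²` edges. -/
theorem stmt17 {V : Type} [Fintype V] [DecidableEq V] [Nonempty V]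
    (G : SimpleGraph V) [DecidableRel G.Adj] (k : ℕ) (hk1 : 1 ≤ k)
    (hk : cyclomaticNumber V G = (k : ℤ))
    (hdeg : ∀ v : V, 2 ≤ G.degree v)
    (hpaths : ∀ S : Set V, (∀ v ∈ S, G.degree v = 2) → (G.induce S).Connected →
      S.ncard ≤ 2 * k) :
    Fintype.card V ≤ 6 * k ^ 2 ∧ Nat.card G.edgeSet ≤ 6 * k ^ 2 := by
  unfold cyclomaticNumber at hk
  exact stmt17' G k hk1 hk hdeg hpaths
end
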